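/- Let κ ≥ ω₁. Suppose there exist infinite cardinals μ and θ with μ^{<θ} = μ < κ ≤ μ^θ. Then there is a dense linear order without endpoints X with a dense subset of size less than κ and |X| = κ. -/

import Mathlib

open Cardinal Set Ordinal
universe u

set_option linter.unusedSectionVars false

namespace Stmt5Aux

variable {ι A : Type u} [LinearOrder ι] [WellFoundedLT ι] [LinearOrder A]

theorem lex_lt_iff {f g : Lex (ι → A)} :
    f < g ↔ ∃ i, (∀ j, j < i → ofLex f j = ofLex g j) ∧ ofLex f i < ofLex g i := Iff.rfl

theorem exists_cov (i : ι) (h : ∀ x : ι, ∃ y, x < y) :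
    ∃ j, i < j ∧ ∀ k, k < j → k ≤ i := by
  have hne : {y : ι | i < y}.Nonempty := h i
  refine ⟨wellFounded_lt.min _ hne, wellFounded_lt.min_mem _ hne, fun k hk => ?_⟩
  by_contra hk'
  exact wellFounded_lt.not_lt_min _ (not_le.1 hk') hk

variable [OrderBot A]

/-- eventually-bottom functions -/
def D : Set (Lex (ι → A)) := {f | ∃ b : ι, ∀ j, b ≤ j → ofLex f j = ⊥}

theorem bot_le_lex (f : Lex (ι → A)) : toLex (fun _ => (⊥ : A)) ≤ f := by
  have wf : WellFounded ((· < ·) : ι → ι → Prop) := IsWellFounded.wf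
  rcases eq_or_ne (toLex (fun _ => (⊥ : A))) f with h | h
  · exact h.le
  · have hne : {j : ι | ofLex f j ≠ ⊥}.Nonempty := by
      by_contra hc
      rw [Set.not_nonempty_iff_eq_empty, Set.eq_empty_iff_forall_notMem] at hc
      apply h
      apply congrArg toLex
      exact funext fun j => (not_not.1 (hc j)).symm
    refine le_of_lt (lex_lt_iff.2 ⟨wf.min _ hne, fun j hj => ?_, ?_⟩)
    · have hz : ofLex f j = ⊥ := by
        by_contra hne'
        exact wf.not_lt_min _ hne' hj
      simp [hz]
    · exact bot_lt_iff_ne_bot.2 (wf.min_mem _ hne)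

theorem dense_lex (hι : ∀ x : ι, ∃ y, x < y) (hA : ∀ x : A, ∃ y, x < y)
    {f g : Lex (ι → A)} (hfg : f < g) : ∃ d ∈ D, f < d ∧ d < g := by
  obtain ⟨α, hagr, hlt⟩ := lex_lt_iff.1 hfg
  obtain ⟨sα, hs1, hs2⟩ := exists_cov α hι
  obtain ⟨b, hb1, hb2⟩ := exists_cov sα hι
  obtain ⟨a', ha'⟩ := hA (ofLex f sα)
  classical
  refine ⟨toLex (fun j => if j ≤ α then ofLex f j else if j = sα then a' else ⊥), ?_, ?_, ?_⟩
  · refine ⟨b, fun j hj => ?_⟩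
    have h1 : ¬ j ≤ α := by
      have : sα < j := lt_of_lt_of_le hb1 hj
      exact fun hc => absurd (hc.trans_lt hs1) (asymm this)
    have h2 : j ≠ sα := ne_of_gt (lt_of_lt_of_le hb1 hj)
    simp [h1, h2]
  · refine lex_lt_iff.2 ⟨sα, fun j hj => ?_, ?_⟩
    · simp [hs2 j hj]
    · have h1 : ¬ sα ≤ α := fun hc => absurd (hc.trans_lt hs1) (lt_irrefl _)
      simpa [h1] using ha'
  · refine lex_lt_iff.2 ⟨α, fun j hj => ?_, ?_⟩
    · simp only [ofLex_toLex, hj.le, if_pos]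
      exact hagr j hj
    · simpa using hlt

theorem exists_gt_lex [Nonempty ι] (hA : ∀ x : A, ∃ y, x < y) (f : Lex (ι → A)) :
    ∃ g, f < g := by
  classical
  obtain ⟨i₀⟩ := ‹Nonempty ι›
  obtain ⟨a', ha'⟩ := hA (ofLex f i₀)
  refine ⟨toLex (fun j => if j = i₀ then a' else ofLex f j), lex_lt_iff.2 ⟨i₀, fun j hj => ?_, ?_⟩⟩
  · simp [ne_of_lt hj]
  · simpa using ha'

end Stmt5Aux

theorem stmt_5 (κ μ θ : Cardinal.{u})
    (hκ : Cardinal.aleph 1 ≤ κ) (hμ : Cardinal.aleph0 ≤ μ) (hθ : Cardinal.aleph0 ≤ θ)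
    (h1 : μ ^< θ = μ) (h2 : μ < κ) (h3 : κ ≤ μ ^ θ) :
    ∃ (X : Type u) (_ : LinearOrder X),
      DenselyOrdered X ∧ NoMinOrder X ∧ NoMaxOrder X ∧
      (∃ D : Set X, (∀ x y : X, x < y → ∃ d ∈ D, x < d ∧ d < y) ∧ Cardinal.mk D < κ) ∧
      Cardinal.mk X = κ := by
  classical
  have hκ0 : ℵ₀ ≤ κ := (aleph0_le_aleph 1).trans hκ
  set ι := θ.ord.ToType with hι
  set A := μ.ord.ToType with hA
  letI : OrderBot A := Ordinal.toTypeOrderBot (by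
    rw [← Cardinal.ord_zero]
    exact (Cardinal.ord_lt_ord.2 (aleph0_pos.trans_le hμ)).ne')
  haveI : Nonempty ι := Ordinal.toType_nonempty_iff_ne_zero.2 (by
    rw [← Cardinal.ord_zero]
    exact ne_of_gt (Cardinal.ord_lt_ord.2 (aleph0_pos.trans_le hθ)))
  -- no-max facts
  have hAmax : ∀ x : A, ∃ y, x < y := by
    haveI := Cardinal.noMaxOrder hμ
    exact fun x => exists_gt x
  have hιmax : ∀ x : ι, ∃ y, x < y := by
    haveI := Cardinal.noMaxOrder hθ
    exact fun x => exists_gt x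
  -- cardinalities
  have hmkι : #ι = θ := by rw [hι, Cardinal.mk_toType, Cardinal.card_ord]
  have hmkA : #A = μ := by rw [hA, Cardinal.mk_toType, Cardinal.card_ord]
  have hmkY : #(Lex (ι → A)) = μ ^ θ := by
    rw [show #(Lex (ι → A)) = #(ι → A) from Cardinal.mk_congr (ofLex (α := ι → A)),
      ← Cardinal.power_def, hmkι, hmkA]
  -- θ ≤ μ
  have hθμ : θ ≤ μ := by
    have h2θ : θ ≤ (2 : Cardinal.{u}) ^< θ := by
      by_contra hcon
      have hx : (2 : Cardinal.{u}) ^< θ < θ := not_le.1 hcon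
      have := Cardinal.le_powerlt (2 : Cardinal.{u}) hx
      exact absurd (Cardinal.cantor _) (not_lt.2 this)
    refine h2θ.trans ?_
    rw [← h1]
    refine Cardinal.powerlt_le.2 fun x hx => ?_
    exact (Cardinal.power_le_power_right ((Cardinal.nat_lt_aleph0 2).le.trans hμ)).trans
      (Cardinal.le_powerlt μ hx)
  -- the dense subset D and its cardinality
  have hDcard : #(Stmt5Aux.D : Set (Lex (ι → A))) ≤ μ := by
    have hsplit : (Stmt5Aux.D : Set (Lex (ι → A))) =
        ⋃ b : ι, {f : Lex (ι → A) | ∀ j, b ≤ j → ofLex f j = ⊥} := by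
      rw [Stmt5Aux.D, Set.setOf_exists]
    have hpiece : ∀ b : ι, #({f : Lex (ι → A) | ∀ j, b ≤ j → ofLex f j = ⊥}) ≤ μ := by
      intro b
      have hinj : Function.Injective
          (fun f : ({f : Lex (ι → A) | ∀ j, b ≤ j → ofLex f j = ⊥}) =>
            (fun j : {j : ι // j < b} => ofLex f.1 j.1)) := by
        intro f1 f2 hf
        apply Subtype.ext
        apply (ofLex (α := ι → A)).injective
        funext j
        rcases le_or_gt b j with hj | hj
        · show ofLex f1.1 j = ofLex f2.1 j
          rw [f1.2 j hj, f2.2 j hj]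
        · exact congrFun hf ⟨j, hj⟩
      have hle := Cardinal.mk_le_of_injective hinj
      have hcard : #({j : ι // j < b} → A) = μ ^ #{j : ι // j < b} := by
        rw [← Cardinal.power_def, hmkA]
      have hlt : #{j : ι // j < b} < θ := by
        haveI : IsWellOrder ι (· < ·) := ⟨⟩
        rw [← Ordinal.card_typein]
        have h' := Cardinal.card_typein_lt (r := ((· < ·) : ι → ι → Prop)) b
          (by rw [hmkι]; exact (Ordinal.type_toType _).symm)
        rwa [hmkι] at h'
      calc #({f : Lex (ι → A) | ∀ j, b ≤ j → ofLex f j = ⊥})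
          ≤ #({j : ι // j < b} → A) := hle
        _ = μ ^ #{j : ι // j < b} := hcard
        _ ≤ μ ^< θ := Cardinal.le_powerlt μ hlt
        _ = μ := h1
    calc #(Stmt5Aux.D : Set (Lex (ι → A)))
        ≤ #ι * ⨆ b : ι, #({f : Lex (ι → A) | ∀ j, b ≤ j → ofLex f j = ⊥}) := by
          rw [hsplit]; exact Cardinal.mk_iUnion_le _
      _ ≤ θ * μ := by
          rw [hmkι]
          exact mul_le_mul_right (ciSup_le' hpiece) θ
      _ ≤ μ * μ := mul_le_mul_left hθμ μ
      _ = μ := Cardinal.mul_eq_self hμ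
  -- get S
  obtain ⟨S, hS⟩ := Cardinal.le_mk_iff_exists_set.1 (h3.trans_eq hmkY.symm)
  set z : Lex (ι → A) := toLex (fun _ => (⊥ : A)) with hz
  have hbot : ∀ f : Lex (ι → A), z ≤ f := Stmt5Aux.bot_le_lex
  set Xs : Set (Lex (ι → A)) := (S ∪ Stmt5Aux.D) \ {z} with hXs
  -- density into Xs
  have hdense : ∀ x y : Lex (ι → A), x ∈ Xs → x < y →
      ∃ d, d ∈ Xs ∧ d ∈ Stmt5Aux.D ∧ x < d ∧ d < y := by
    intro x y hx hxy
    obtain ⟨d, hd, hd1, hd2⟩ := Stmt5Aux.dense_lex hιmax hAmax hxy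
    refine ⟨d, ⟨Or.inr hd, ?_⟩, hd, hd1, hd2⟩
    simp only [Set.mem_singleton_iff]
    exact ne_of_gt (lt_of_le_of_lt (hbot x) hd1)
  refine ⟨↥Xs, inferInstance, ?_, ?_, ?_, ?_, ?_⟩
  · constructor
    intro a b hab
    obtain ⟨d, hdX, _, h1', h2'⟩ := hdense a b a.2 (Subtype.coe_lt_coe.2 hab)
    exact ⟨⟨d, hdX⟩, h1', h2'⟩
  · constructor
    intro a
    have haz : z < (a : Lex (ι → A)) := by
      rcases (hbot a).lt_or_eq with h | h
      · exact h
      · exact absurd h.symm (by simpa using a.2.2)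
    obtain ⟨d, hd, hd1, hd2⟩ := Stmt5Aux.dense_lex hιmax hAmax haz
    have hdX : d ∈ Xs := ⟨Or.inr hd, by
      simp only [Set.mem_singleton_iff]
      exact ne_of_gt hd1⟩
    exact ⟨⟨d, hdX⟩, hd2⟩
  · constructor
    intro a
    obtain ⟨g, hg⟩ := Stmt5Aux.exists_gt_lex hAmax (a : Lex (ι → A))
    obtain ⟨d, hdX, _, h1', _⟩ := hdense a g a.2 hg
    exact ⟨⟨d, hdX⟩, h1'⟩
  · refine ⟨{x : ↥Xs | (x : Lex (ι → A)) ∈ Stmt5Aux.D}, ?_, ?_⟩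
    · intro x y hxy
      obtain ⟨d, hdX, hdD, h1', h2'⟩ := hdense x y x.2 (Subtype.coe_lt_coe.2 hxy)
      exact ⟨⟨d, hdX⟩, hdD, h1', h2'⟩
    · have : #({x : ↥Xs | (x : Lex (ι → A)) ∈ Stmt5Aux.D}) ≤
          #(Stmt5Aux.D : Set (Lex (ι → A))) := by
        apply Cardinal.mk_le_of_injective
          (f := fun x : ({x : ↥Xs | (x : Lex (ι → A)) ∈ Stmt5Aux.D}) =>
            (⟨(x : ↥Xs), x.2⟩ : (Stmt5Aux.D : Set (Lex (ι → A)))))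
        intro a b hab
        simp only [Subtype.mk.injEq] at hab
        exact Subtype.ext (Subtype.ext hab)
      exact lt_of_le_of_lt (this.trans hDcard) h2
  · -- cardinality of Xs is κ
    apply le_antisymm
    · calc #(↥Xs) ≤ #(↥(S ∪ Stmt5Aux.D)) := Cardinal.mk_le_mk_of_subset diff_subset
        _ ≤ #(↥S) + #(Stmt5Aux.D : Set (Lex (ι → A))) := Cardinal.mk_union_le _ _
        _ ≤ κ + μ := add_le_add hS.le hDcard
        _ = κ := Cardinal.add_eq_left hκ0 h2.le
    · have hsub : S \ {z} ⊆ Xs := diff_subset_diff_left subset_union_left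
      have hS' : κ ≤ #(↥(S \ {z})) := by
        have h1' : #(↥S) ≤ #(↥(S \ {z})) + 1 := by
          calc #(↥S) ≤ #(↥((S \ {z}) ∪ {z})) := Cardinal.mk_le_mk_of_subset (by
                intro a ha
                by_cases haz : a = z
                · exact Or.inr (by simpa using haz)
                · exact Or.inl ⟨ha, by simpa using haz⟩)
            _ ≤ #(↥(S \ {z})) + #({z} : Set (Lex (ι → A))) := Cardinal.mk_union_le _ _
            _ = #(↥(S \ {z})) + 1 := by rw [Cardinal.mk_singleton]
        rcases lt_or_ge (#(↥(S \ {z}))) ℵ₀ with hfin | hinf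
        · exfalso
          have : #(↥S) < ℵ₀ := lt_of_le_of_lt h1' (Cardinal.add_lt_aleph0 hfin Cardinal.one_lt_aleph0)
          exact absurd (hS ▸ this) (not_lt.2 hκ0)
        · have : #(↥(S \ {z})) + 1 = #(↥(S \ {z})) :=
            Cardinal.add_one_eq hinf
          rw [← hS]
          exact h1'.trans this.le
      exact hS'.trans (Cardinal.mk_le_mk_of_subset hsub)
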